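/- Let G be a finite group which is an internal semidirect product G = N ⋊ K with gcd(|N|, |K|) = 1, and let g ∈ G be an element whose order divides |K|. Then g lies in some conjugate K^h of K (h ∈ G). -/

import Mathlib

open Subgroup
open scoped commutatorElement

set_option linter.unnecessarySimpa false
set_option maxHeartbeats 1000000

universe u

-- helper: card of image under hom injective on the subgroup
private lemma card_map_eq_of {G : Type*} {G' : Type*} [Group G] [Group G'] (f : G →* G')
    (H : Subgroup G) (hinj : ∀ x ∈ H, f x = 1 → x = 1) :
    Nat.card (H.map f) = Nat.card H := by
  have hinj' : Function.Injective (f.comp H.subtype) := by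
    rw [← MonoidHom.ker_eq_bot_iff, eq_bot_iff]
    intro x hx
    have hx1 : (x : G) = 1 := hinj x.1 x.2 hx
    simp [Subgroup.mem_bot, Subtype.ext_iff, hx1]
  have h1 : (f.comp H.subtype).range = H.map f := by
    rw [MonoidHom.range_comp, Subgroup.range_subtype]
  rw [← h1]
  exact (Nat.card_congr (MonoidHom.ofInjective hinj').toEquiv).symm

private lemma card_map_dvd {G : Type*} {G' : Type*} [Group G] [Group G'] [Finite G] (f : G →* G')
    (H : Subgroup G) : Nat.card (H.map f) ∣ Nat.card H := by
  have h1 : (f.comp H.subtype).range = H.map f := by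
    rw [MonoidHom.range_comp, Subgroup.range_subtype]
  rw [← h1, ← Nat.card_congr (QuotientGroup.quotientKerEquivRange (f.comp H.subtype)).toEquiv]
  rw [Subgroup.card_eq_card_quotient_mul_card_subgroup (f.comp H.subtype).ker]
  exact Dvd.intro _ rfl

private lemma card_subgroupOf' {G : Type*} [Group G] {H M : Subgroup G} (h : H ≤ M) :
    Nat.card (H.subgroupOf M) = Nat.card H :=
  Nat.card_congr (Subgroup.subgroupOfEquivOfLe h).toEquiv

private lemma isComplement'_subgroupOf {G : Type*} [Group G] {N H M : Subgroup G}
    (hc : N.IsComplement' H) (hHM : H ≤ M) :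
    (N.subgroupOf M).IsComplement' (H.subgroupOf M) := by
  rw [Subgroup.IsComplement', Subgroup.isComplement_iff_existsUnique]
  intro m
  obtain ⟨⟨n, h⟩, hnh⟩ := (Subgroup.isComplement_iff_existsUnique.mp hc) (m : G)
  have hg : (n : G) * h = (m : G) := hnh.1
  have hhM : (h : G) ∈ M := hHM h.2
  have hnM : (n : G) ∈ M := by
    have : (n : G) = (m : G) * (h : G)⁻¹ := by rw [← hg]; group
    rw [this]; exact mul_mem m.2 (inv_mem hhM)
  refine ⟨⟨⟨⟨n, hnM⟩, by simpa [Subgroup.mem_subgroupOf] using n.2⟩,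
          ⟨⟨h, hhM⟩, by simpa [Subgroup.mem_subgroupOf] using h.2⟩⟩, ?_, ?_⟩
  · ext
    exact hg
  · rintro ⟨n', h'⟩ hn'h'
    have hkey := hnh.2 (⟨_, Subgroup.mem_subgroupOf.mp n'.2⟩, ⟨_, Subgroup.mem_subgroupOf.mp h'.2⟩)
      (show ((n' : M) : G) * ((h' : M) : G) = (m : G) by
        exact_mod_cast congrArg Subtype.val hn'h')
    have h1 : (((n' : M)) : G) = (n : G) := congrArg Subtype.val (congrArg Prod.fst hkey)
    have h2 : (((h' : M)) : G) = (h : G) := congrArg Subtype.val (congrArg Prod.snd hkey)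
    refine Prod.ext ?_ ?_ <;> ext <;> assumption

private lemma isComplement'_map_quot {G : Type*} [Group G] {N H P : Subgroup G} [P.Normal]
    (hc : N.IsComplement' H) (hPH : P ≤ H) :
    (N.map (QuotientGroup.mk' P)).IsComplement' (H.map (QuotientGroup.mk' P)) := by
  rw [Subgroup.IsComplement', Subgroup.isComplement_iff_existsUnique]
  intro z
  obtain ⟨g, rfl⟩ := QuotientGroup.mk'_surjective P z
  obtain ⟨⟨n, h⟩, hnh⟩ := (Subgroup.isComplement_iff_existsUnique.mp hc) g
  have hg : (n : G) * h = g := hnh.1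
  refine ⟨⟨⟨_, Subgroup.mem_map_of_mem _ n.2⟩, ⟨_, Subgroup.mem_map_of_mem _ h.2⟩⟩, ?_, ?_⟩
  · show QuotientGroup.mk' P n * QuotientGroup.mk' P h = QuotientGroup.mk' P g
    rw [← map_mul, hg]
  · rintro ⟨a, b⟩ hab
    have hab : (a : G ⧸ P) * b = QuotientGroup.mk' P g := hab
    obtain ⟨n₁, hn₁, hn₁a⟩ := a.2
    obtain ⟨h₁, hh₁, hh₁b⟩ := b.2
    have hab' : QuotientGroup.mk' P (n₁ * h₁) = QuotientGroup.mk' P g := by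
      rw [map_mul, hn₁a, hh₁b, hab]
    have hp : g⁻¹ * (n₁ * h₁) ∈ P := by
      have : QuotientGroup.mk' P (g⁻¹ * (n₁ * h₁)) = 1 := by
        rw [map_mul, map_inv, hab', inv_mul_cancel]
      rwa [← MonoidHom.mem_ker, QuotientGroup.ker_mk' P] at this
    -- n₁ = n
    have hNH : (n : G)⁻¹ * n₁ ∈ H := by
      have : (n : G)⁻¹ * n₁ = (h : G) * (g⁻¹ * (n₁ * h₁)) * h₁⁻¹ := by
        rw [← hg]; group
      rw [this]
      exact mul_mem (mul_mem h.2 (hPH hp)) (inv_mem hh₁)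
    have hn₁n : n₁ = (n : G) := by
      have h0 : (n : G)⁻¹ * n₁ = 1 :=
        Subgroup.disjoint_def.mp hc.disjoint (mul_mem (inv_mem n.2) hn₁) hNH
      have := congrArg (fun t => (n : G) * t) h0
      simpa [mul_assoc] using this
    have ha : (a : G ⧸ P) = QuotientGroup.mk' P n := by rw [← hn₁a, hn₁n]
    have hb : (b : G ⧸ P) = QuotientGroup.mk' P h := by
      have := hab
      rw [ha, ← hg, map_mul] at this
      exact mul_left_cancel this
    refine Prod.ext ?_ ?_ <;> ext
    · exact ha
    · exact hb

private lemma card_comap_mk' {G : Type*} [Group G] [Finite G] (N : Subgroup G) [N.Normal]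
    (X : Subgroup (G ⧸ N)) :
    Nat.card (X.comap (QuotientGroup.mk' N)) = Nat.card X * Nat.card N := by
  set L := X.comap (QuotientGroup.mk' N) with hL
  have hNL : N ≤ L := by
    intro x hx
    have : QuotientGroup.mk' N x = 1 := by
      rwa [← MonoidHom.mem_ker, QuotientGroup.ker_mk' N]
    simp only [hL, Subgroup.mem_comap, this]
    exact one_mem X
  set f := (QuotientGroup.mk' N).comp L.subtype with hf
  have hker : f.ker = N.subgroupOf L := by
    rw [hf, ← MonoidHom.comap_ker, QuotientGroup.ker_mk' N]; rfl
  have hrange : f.range = X := by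
    rw [hf, MonoidHom.range_comp, Subgroup.range_subtype]
    apply le_antisymm
    · rintro _ ⟨y, hy, rfl⟩
      exact hy
    · intro x hx
      obtain ⟨g, rfl⟩ := QuotientGroup.mk'_surjective N x
      exact ⟨g, hx, rfl⟩
  have h1 : Nat.card L = Nat.card (L ⧸ f.ker) * Nat.card f.ker :=
    Subgroup.card_eq_card_quotient_mul_card_subgroup f.ker
  rw [h1, Nat.card_congr (QuotientGroup.quotientKerEquivRange f).toEquiv, hrange, hker,
    Nat.card_congr (Subgroup.subgroupOfEquivOfLe hNL).toEquiv]

private lemma card_inf_comap {G : Type*} [Group G] [Finite G] {N A : Subgroup G} [N.Normal]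
    (hc : N.IsComplement' A) (X : Subgroup (G ⧸ N)) :
    Nat.card ((A ⊓ X.comap (QuotientGroup.mk' N) : Subgroup G)) = Nat.card X := by
  set L := X.comap (QuotientGroup.mk' N) with hL
  set f := (QuotientGroup.mk' N).comp (A ⊓ L).subtype with hf
  have hinj : Function.Injective f := by
    rw [← MonoidHom.ker_eq_bot_iff, eq_bot_iff]
    rintro ⟨x, hx⟩ hker
    have hxN : x ∈ N := by
      rwa [← QuotientGroup.ker_mk' N]
    have : x = 1 := Subgroup.disjoint_def.mp hc.disjoint hxN hx.1
    simp [Subgroup.mem_bot, Subtype.ext_iff, this]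
  have hrange : f.range = X := by
    rw [hf, MonoidHom.range_comp, Subgroup.range_subtype]
    apply le_antisymm
    · rintro _ ⟨y, hy, rfl⟩
      exact hy.2
    · intro x hx
      obtain ⟨g, hg⟩ := QuotientGroup.mk'_surjective N x
      obtain ⟨⟨n, a⟩, hna⟩ := hc.existsUnique g
      have hna : (n : G) * a = g := hna.1
      have hmk : QuotientGroup.mk' N a = x := by
        have h1 : QuotientGroup.mk' N n = 1 := by
          rw [← MonoidHom.mem_ker, QuotientGroup.ker_mk' N]; exact n.2
        rw [← hg, ← hna, map_mul, h1, one_mul]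
      refine ⟨(a : G), ⟨a.2, ?_⟩, hmk⟩
      show QuotientGroup.mk' N (a : G) ∈ X
      rw [hmk]; exact hx
  rw [← hrange, ← Nat.card_congr (MonoidHom.ofInjective hinj).toEquiv]

private lemma map_conj_conj {G : Type*} [Group G] (H : Subgroup G) (a b : G) :
    (H.map (MulAut.conj a).toMonoidHom).map (MulAut.conj b).toMonoidHom
      = H.map (MulAut.conj (b * a)).toMonoidHom := by
  rw [Subgroup.map_map]
  congr 1
  ext x
  simp [mul_assoc]

private lemma map_conj_self {G : Type*} [Group G] (L : Subgroup G) [hL : L.Normal] (a : G) :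
    L.map (MulAut.conj a).toMonoidHom = L := by
  ext x
  simp only [Subgroup.mem_map, MulEquiv.coe_toMonoidHom, MulAut.conj_apply]
  constructor
  · rintro ⟨y, hy, rfl⟩
    exact hL.conj_mem y hy a
  · intro hx
    exact ⟨a⁻¹ * x * a, by simpa using hL.conj_mem x hx a⁻¹, by group⟩

private lemma conj_subgroup_card_prime {G : Type*} [Group G] [Finite G] {p n : ℕ} (hp : p.Prime)
    {L P₁ P₂ : Subgroup G} (hLcard : Nat.card L = p * n) (hn : ¬ p ∣ n)
    (h1le : P₁ ≤ L) (h2le : P₂ ≤ L) (h1 : Nat.card P₁ = p) (h2 : Nat.card P₂ = p) :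
    ∃ g : G, g ∈ L ∧ P₁.map (MulAut.conj g).toMonoidHom = P₂ := by
  haveI : Fact p.Prime := ⟨hp⟩
  have hn0 : n ≠ 0 := by
    rintro rfl
    rw [mul_zero] at hLcard
    exact Nat.card_pos.ne' hLcard
  have hfact : (Nat.card L).factorization p = 1 := by
    rw [hLcard, Nat.factorization_mul hp.pos.ne' hn0, Finsupp.add_apply,
      hp.factorization, Finsupp.single_eq_same, Nat.factorization_eq_zero_of_not_dvd hn]
  have hsylcard : ∀ Q : Sylow p L, Nat.card Q = p := by
    intro Q
    rw [Q.card_eq_multiplicity, hfact, pow_one]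
  have hcard1 : Nat.card (P₁.subgroupOf L) = p := by
    rw [Nat.card_congr (Subgroup.subgroupOfEquivOfLe h1le).toEquiv, h1]
  have hcard2 : Nat.card (P₂.subgroupOf L) = p := by
    rw [Nat.card_congr (Subgroup.subgroupOfEquivOfLe h2le).toEquiv, h2]
  obtain ⟨Q₁, hQ₁⟩ := (IsPGroup.of_card (by rw [hcard1, pow_one]) :
    IsPGroup p (P₁.subgroupOf L)).exists_le_sylow
  obtain ⟨Q₂, hQ₂⟩ := (IsPGroup.of_card (by rw [hcard2, pow_one]) :
    IsPGroup p (P₂.subgroupOf L)).exists_le_sylow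
  have hq1 : P₁.subgroupOf L = (Q₁ : Subgroup L) :=
    Subgroup.eq_of_le_of_card_ge hQ₁ (by rw [hsylcard, hcard1])
  have hq2 : P₂.subgroupOf L = (Q₂ : Subgroup L) :=
    Subgroup.eq_of_le_of_card_ge hQ₂ (by rw [hsylcard, hcard2])
  obtain ⟨g, hg⟩ := MulAction.exists_smul_eq L Q₁ Q₂
  have hmap : (P₁.subgroupOf L).map (MulAut.conj g).toMonoidHom = P₂.subgroupOf L := by
    rw [hq1, hq2, ← hg, Sylow.coe_subgroup_smul, Subgroup.pointwise_smul_def]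
    rfl
  refine ⟨(g : G), g.2, ?_⟩
  have hcomm : ((MulAut.conj (g : G)).toMonoidHom.comp L.subtype) =
      L.subtype.comp (MulAut.conj g).toMonoidHom := by
    ext x
    simp
  calc P₁.map (MulAut.conj (g : G)).toMonoidHom
      = ((P₁.subgroupOf L).map L.subtype).map (MulAut.conj (g : G)).toMonoidHom := by
        rw [Subgroup.subgroupOf_map_subtype, inf_eq_left.mpr h1le]
    _ = ((P₁.subgroupOf L).map (MulAut.conj g).toMonoidHom).map L.subtype := by
        rw [Subgroup.map_map, Subgroup.map_map, hcomm]
    _ = P₂ := by rw [hmap, Subgroup.subgroupOf_map_subtype, inf_eq_left.mpr h2le]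

private lemma isComplement'_map_equiv {G G' : Type*} [Group G] [Group G'] (e : G ≃* G')
    {N H : Subgroup G} (hc : N.IsComplement' H) :
    (N.map e.toMonoidHom).IsComplement' (H.map e.toMonoidHom) := by
  rw [Subgroup.IsComplement', Subgroup.isComplement_iff_existsUnique]
  intro g'
  obtain ⟨⟨n, h⟩, hnh⟩ := (Subgroup.isComplement_iff_existsUnique.mp hc) (e.symm g')
  have hg : (n : G) * h = e.symm g' := hnh.1
  refine ⟨⟨⟨e n, Subgroup.mem_map_of_mem _ n.2⟩, ⟨e h, Subgroup.mem_map_of_mem _ h.2⟩⟩, ?_, ?_⟩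
  · show e n * e h = g'
    rw [← map_mul, hg, e.apply_symm_apply]
  · rintro ⟨a, b⟩ hab
    have hab : (a : G') * b = g' := hab
    obtain ⟨n₁, hn₁, hn₁a⟩ := a.2
    obtain ⟨h₁, hh₁, hh₁b⟩ := b.2
    have hkey := hnh.2 (⟨n₁, hn₁⟩, ⟨h₁, hh₁⟩) (by
      show n₁ * h₁ = e.symm g'
      apply e.injective
      rw [map_mul, e.apply_symm_apply]
      show e.toMonoidHom n₁ * e.toMonoidHom h₁ = g'
      rw [hn₁a, hh₁b, hab])
    have h1 : n₁ = (n : G) := congrArg Subtype.val (congrArg Prod.fst hkey)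
    have h2 : h₁ = (h : G) := congrArg Subtype.val (congrArg Prod.snd hkey)
    refine Prod.ext ?_ ?_ <;> ext
    · rw [← hn₁a, h1]; rfl
    · rw [← hh₁b, h2]; rfl

private theorem conj_complements :
    ∀ (n : ℕ) (G : Type u) [Group G] [Finite G] (N H K : Subgroup G) [N.Normal],
    Nat.card G ≤ n → Nat.Coprime (Nat.card N) N.index →
    (∀ x y : G, x * y * x⁻¹ * y⁻¹ ∈ N) → N.IsComplement' H → N.IsComplement' K →
    ∃ g : G, H.map (MulAut.conj g).toMonoidHom = K := by
  intro n
  induction n with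
  | zero =>
    intro G _ _ N H K _ hle _ _ _ _
    have := Nat.card_pos (α := G)
    omega
  | succ n ih =>
    intro G _ _ N H K _ hle hcop hcomm hH hK
    have hHcard : N.index = Nat.card H := hH.symm.index_eq_card
    have hKcard : N.index = Nat.card K := hK.symm.index_eq_card
    by_cases hidx : N.index = 1
    · -- both complements are trivial
      have hHbot : H = ⊥ := Subgroup.card_eq_one.mp (by rw [← hHcard]; exact hidx)
      have hKbot : K = ⊥ := Subgroup.card_eq_one.mp (by rw [← hKcard]; exact hidx)
      exact ⟨1, by rw [hHbot, hKbot, Subgroup.map_bot]⟩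
    · set p := N.index.minFac with hpdef
      have hp : p.Prime := Nat.minFac_prime hidx
      haveI : Fact p.Prime := ⟨hp⟩
      have hpdvd : p ∣ N.index := Nat.minFac_dvd _
      have hpN : ¬ p ∣ Nat.card N := fun hdvd =>
        hp.one_lt.ne' (Nat.eq_one_of_dvd_coprimes hcop hdvd hpdvd)
      -- Cauchy in the quotient
      have hpQ : p ∣ Nat.card (G ⧸ N) := by rwa [← Subgroup.index_eq_card]
      obtain ⟨x, hx⟩ := exists_prime_orderOf_dvd_card' p hpQ
      set X := Subgroup.zpowers x with hXdef
      have hXcard : Nat.card X = p := by rw [Nat.card_zpowers, hx]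
      have hcommQ : ∀ a b : G ⧸ N, a * b = b * a := by
        intro a b
        obtain ⟨a', rfl⟩ := QuotientGroup.mk'_surjective N a
        obtain ⟨b', rfl⟩ := QuotientGroup.mk'_surjective N b
        refine commutatorElement_eq_one_iff_mul_comm.mp ?_
        have hmem : ⁅a', b'⁆ ∈ N := by
          rw [commutatorElement_def]
          exact hcomm a' b'
        calc ⁅QuotientGroup.mk' N a', QuotientGroup.mk' N b'⁆
            = QuotientGroup.mk' N ⁅a', b'⁆ := (map_commutatorElement _ _ _).symm
          _ = 1 := by
              rw [← MonoidHom.mem_ker, QuotientGroup.ker_mk' N]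
              exact hmem
      haveI hXnormal : X.Normal := ⟨fun a ha c => by rw [hcommQ c a, mul_assoc, mul_inv_cancel, mul_one]; exact ha⟩
      set L := X.comap (QuotientGroup.mk' N) with hLdef
      haveI hLnormal : L.Normal := hXnormal.comap _
      have hNL : N ≤ L := by
        intro y hy
        have : QuotientGroup.mk' N y = 1 := by
          rwa [← MonoidHom.mem_ker, QuotientGroup.ker_mk' N]
        simp only [hLdef, Subgroup.mem_comap, this]
        exact one_mem X
      have hLcard : Nat.card L = p * Nat.card N := by
        rw [hLdef, card_comap_mk', hXcard]
      have hHL : Nat.card (H ⊓ L : Subgroup G) = p := by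
        rw [hLdef, card_inf_comap hH, hXcard]
      have hKL : Nat.card (K ⊓ L : Subgroup G) = p := by
        rw [hLdef, card_inf_comap hK, hXcard]
      obtain ⟨a, haL, ha⟩ := conj_subgroup_card_prime hp hLcard hpN inf_le_right inf_le_right hHL hKL
      obtain ⟨H₁, hH₁def⟩ : ∃ H₁ : Subgroup G, H₁ = H.map (MulAut.conj a).toMonoidHom := ⟨_, rfl⟩
      have hH₁ : N.IsComplement' H₁ := by
        rw [hH₁def, ← map_conj_self N a]
        exact isComplement'_map_equiv (MulAut.conj a) hH
      have hH₁L : H₁ ⊓ L = K ⊓ L := by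
        rw [hH₁def]
        conv_lhs => rw [← map_conj_self L a]
        rw [← Subgroup.map_inf _ _ _ (MulAut.conj a).injective, ha]
      obtain ⟨P, hPdef⟩ : ∃ P : Subgroup G, P = K ⊓ L := ⟨_, rfl⟩
      rw [← hPdef] at ha hKL hH₁L
      have hPcard : Nat.card P = p := hKL
      have hPK : P ≤ K := by rw [hPdef]; exact inf_le_left
      have hPH₁ : P ≤ H₁ := by rw [← hH₁L]; exact inf_le_left
      set M := Subgroup.normalizer (P : Set G) with hMdef
      have hmemM : ∀ (A : Subgroup G), P = A ⊓ L → A ≤ M := by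
        intro A hPA h hh
        rw [hMdef, Subgroup.mem_normalizer_iff]
        intro y
        rw [hPA, Subgroup.mem_inf, Subgroup.mem_inf]
        constructor
        · rintro ⟨h1, h2⟩
          exact ⟨mul_mem (mul_mem hh h1) (inv_mem hh), hLnormal.conj_mem y h2 h⟩
        · rintro ⟨h1, h2⟩
          have h3 : h⁻¹ * (h * y * h⁻¹) * h ∈ A := mul_mem (mul_mem (inv_mem hh) h1) hh
          have h4 : h⁻¹ * (h * y * h⁻¹) * h⁻¹⁻¹ ∈ L := hLnormal.conj_mem _ h2 h⁻¹
          have heq : h⁻¹ * (h * y * h⁻¹) * h = y := by group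
          rw [heq] at h3
          rw [inv_inv, heq] at h4
          exact ⟨h3, h4⟩
      have hH₁M : H₁ ≤ M := hmemM H₁ hH₁L.symm
      have hKM : K ≤ M := hmemM K hPdef
      by_cases hM : M = ⊤
      · -- P is normal in G; pass to the quotient G ⧸ P
        haveI hPnormal : P.Normal := by rwa [← Subgroup.normalizer_eq_top_iff, ← hMdef]
        set π := QuotientGroup.mk' P with hπdef
        have hcardQP : Nat.card (G ⧸ P) ≤ n := by
          have h1 : Nat.card G = Nat.card (G ⧸ P) * Nat.card P :=
            Subgroup.card_eq_card_quotient_mul_card_subgroup P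
          have h2 := Nat.card_pos (α := G ⧸ P)
          have hp2 := hp.two_le
          rw [hPcard] at h1
          nlinarith
        haveI : (N.map π).Normal := Subgroup.Normal.map ‹N.Normal› π (QuotientGroup.mk'_surjective P)
        have hcompH : (N.map π).IsComplement' (H₁.map π) := isComplement'_map_quot hH₁ hPH₁
        have hcompK : (N.map π).IsComplement' (K.map π) := isComplement'_map_quot hK hPK
        have hcardN' : Nat.card (N.map π) = Nat.card N := by
          apply card_map_eq_of
          intro y hy hy1
          rw [hπdef, ← MonoidHom.mem_ker, QuotientGroup.ker_mk' P] at hy1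
          exact Subgroup.disjoint_def.mp hK.disjoint hy (hPK hy1)
        have hcop' : Nat.Coprime (Nat.card (N.map π)) (N.map π).index := by
          rw [hcompH.symm.index_eq_card, hcardN']
          have hdvd : Nat.card (H₁.map π) ∣ Nat.card H := by
            refine (card_map_dvd π H₁).trans ?_
            rw [hH₁def, card_map_eq_of _ _ (fun y _ hy => by
              simpa using (MulAut.conj a).injective (by simpa using hy))]
          exact Nat.Coprime.coprime_dvd_right hdvd (hHcard ▸ hcop)
        have hcomm' : ∀ u v : G ⧸ P, u * v * u⁻¹ * v⁻¹ ∈ N.map π := by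
          intro u v
          obtain ⟨u', rfl⟩ := QuotientGroup.mk'_surjective P u
          obtain ⟨v', rfl⟩ := QuotientGroup.mk'_surjective P v
          refine ⟨u' * v' * u'⁻¹ * v'⁻¹, hcomm u' v', by rw [map_mul, map_mul, map_mul, map_inv, map_inv]⟩
        obtain ⟨gq, hgq⟩ := ih (G ⧸ P) (N.map π) (H₁.map π) (K.map π) hcardQP hcop' hcomm'
          hcompH hcompK
        obtain ⟨g, rfl⟩ := QuotientGroup.mk'_surjective P gq
        rw [show (QuotientGroup.mk' P) g = π g from rfl] at hgq
        have hcommute : π.comp (MulAut.conj g).toMonoidHom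
            = (MulAut.conj (π g)).toMonoidHom.comp π := by
          ext z
          simp [map_mul]
        have hkey : (H₁.map (MulAut.conj g).toMonoidHom).map π = K.map π := by
          rw [← hgq, Subgroup.map_map, Subgroup.map_map, hcommute]
        have hPle1 : P ≤ H₁.map (MulAut.conj g).toMonoidHom := by
          rw [← map_conj_self P g]
          exact Subgroup.map_mono hPH₁
        have hfinal : H₁.map (MulAut.conj g).toMonoidHom = K := by
          have h1 := congrArg (Subgroup.comap π) hkey
          rwa [Subgroup.comap_map_eq_self (by rw [hπdef, QuotientGroup.ker_mk' P]; exact hPle1),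
            Subgroup.comap_map_eq_self (by rw [hπdef, QuotientGroup.ker_mk' P]; exact hPK)] at h1
        exact ⟨g * a, by rw [← map_conj_conj, ← hH₁def, hfinal]⟩
      · -- M is a proper subgroup; use induction inside M
        have hcardM : Nat.card M ≤ n := by
          have hdvd := Subgroup.card_subgroup_dvd_card M
          have hne : Nat.card M ≠ Nat.card G := fun h =>
            hM (Subgroup.eq_top_of_card_eq M h)
          have := Nat.card_pos (α := G)
          have hlt : Nat.card M < Nat.card G :=
            lt_of_le_of_ne (Nat.le_of_dvd (by omega) hdvd) hne
          omega
        haveI : (N.subgroupOf M).Normal := Subgroup.normal_subgroupOf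
        have hcompH : (N.subgroupOf M).IsComplement' (H₁.subgroupOf M) :=
          isComplement'_subgroupOf hH₁ hH₁M
        have hcompK : (N.subgroupOf M).IsComplement' (K.subgroupOf M) :=
          isComplement'_subgroupOf hK hKM
        have hcop' : Nat.Coprime (Nat.card (N.subgroupOf M)) (N.subgroupOf M).index := by
          rw [hcompH.symm.index_eq_card, card_subgroupOf' hH₁M]
          have h1 : Nat.card (N.subgroupOf M) ∣ Nat.card N := by
            have : (N.subgroupOf M).map M.subtype = N ⊓ M := Subgroup.subgroupOf_map_subtype N M
            rw [← card_map_eq_of M.subtype (N.subgroupOf M)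
              (fun y _ hy => OneMemClass.coe_eq_one.mp hy), this]
            exact Subgroup.card_dvd_of_le inf_le_left
          have h2 : Nat.card H₁ = Nat.card H := by
            rw [hH₁def, card_map_eq_of _ _ (fun y _ hy => by
              simpa using (MulAut.conj a).injective (by simpa using hy))]
          rw [h2]
          exact Nat.Coprime.coprime_dvd_left h1 (hHcard ▸ hcop)
        have hcomm' : ∀ u v : M, u * v * u⁻¹ * v⁻¹ ∈ N.subgroupOf M := by
          intro u v
          rw [Subgroup.mem_subgroupOf]
          push_cast
          exact hcomm u v
        obtain ⟨m, hm⟩ := ih M (N.subgroupOf M) (H₁.subgroupOf M) (K.subgroupOf M) hcardM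
          hcop' hcomm' hcompH hcompK
        have hcommute : ((MulAut.conj (m : G)).toMonoidHom.comp M.subtype) =
            M.subtype.comp (MulAut.conj m).toMonoidHom := by
          ext z
          simp
        have hfinal : H₁.map (MulAut.conj (m : G)).toMonoidHom = K := by
          calc H₁.map (MulAut.conj (m : G)).toMonoidHom
              = ((H₁.subgroupOf M).map M.subtype).map (MulAut.conj (m : G)).toMonoidHom := by
                rw [Subgroup.subgroupOf_map_subtype, inf_eq_left.mpr hH₁M]
            _ = ((H₁.subgroupOf M).map (MulAut.conj m).toMonoidHom).map M.subtype := by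
                rw [Subgroup.map_map, Subgroup.map_map, hcommute]
            _ = K := by rw [hm, Subgroup.subgroupOf_map_subtype, inf_eq_left.mpr hKM]
        exact ⟨(m : G) * a, by rw [← map_conj_conj, ← hH₁def, hfinal]⟩

theorem stmt_5 {G : Type*} [Group G] [Finite G] (N K : Subgroup G) [N.Normal]
    (hcop : Nat.Coprime (Nat.card N) (Nat.card K))
    (hcomp : N.IsComplement' K)
    (g : G) (hg : orderOf g ∣ Nat.card K) :
    ∃ h : G, g ∈ K.map (MulAut.conj h).toMonoidHom := by
  have hidx : N.index = Nat.card K := hcomp.symm.index_eq_card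
  set π := QuotientGroup.mk' N with hπdef
  set x := π g with hxdef
  have h1 : orderOf x ∣ orderOf g := orderOf_map_dvd π g
  have h2 : orderOf g ∣ orderOf x := by
    have hgN : g ^ orderOf x ∈ N := by
      have : π (g ^ orderOf x) = 1 := by rw [map_pow, ← hxdef, pow_orderOf_eq_one]
      rwa [← MonoidHom.mem_ker, QuotientGroup.ker_mk' N] at this
    have hd1 : orderOf (g ^ orderOf x) ∣ Nat.card N := Subgroup.orderOf_dvd_natCard N hgN
    have hd2 : orderOf (g ^ orderOf x) ∣ Nat.card K := (orderOf_pow_dvd _).trans hg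
    have hd3 : orderOf (g ^ orderOf x) = 1 := Nat.eq_one_of_dvd_coprimes hcop hd1 hd2
    have hone : g ^ orderOf x = 1 := orderOf_eq_one_iff.mp hd3
    exact orderOf_dvd_of_pow_eq_one hone
  have horder : orderOf x = orderOf g := Nat.dvd_antisymm h1 h2
  set X := Subgroup.zpowers x with hXdef
  set L := X.comap π with hLdef
  have hNL : N ≤ L := by
    intro y hy
    have h0 : π y = 1 := by rwa [← MonoidHom.mem_ker, QuotientGroup.ker_mk' N]
    simp only [hLdef, Subgroup.mem_comap, h0]
    exact one_mem X
  have hzle : Subgroup.zpowers g ≤ L := by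
    intro y hy
    obtain ⟨k, rfl⟩ := Subgroup.mem_zpowers_iff.mp hy
    simp only [hLdef, Subgroup.mem_comap, map_zpow]
    exact Subgroup.zpow_mem X (Subgroup.mem_zpowers x) k
  have hXcard : Nat.card X = orderOf g := by rw [hXdef, Nat.card_zpowers, horder]
  have hLcard : Nat.card L = orderOf g * Nat.card N := by
    rw [hLdef, card_comap_mk', hXcard]
  have hKL : Nat.card (K ⊓ L : Subgroup G) = orderOf g := by
    rw [hLdef, card_inf_comap hcomp, hXcard]
  have hdisj1 : Disjoint (N.subgroupOf L) ((Subgroup.zpowers g).subgroupOf L) := by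
    rw [Subgroup.disjoint_def]
    intro y hy1 hy2
    rw [Subgroup.mem_subgroupOf] at hy1 hy2
    have ho1 : orderOf (y : G) ∣ Nat.card N := Subgroup.orderOf_dvd_natCard N hy1
    have ho2 : orderOf (y : G) ∣ Nat.card K :=
      ((Subgroup.orderOf_dvd_natCard _ hy2).trans (by rw [Nat.card_zpowers])).trans hg
    have := Nat.eq_one_of_dvd_coprimes hcop ho1 ho2
    have hy : (y : G) = 1 := orderOf_eq_one_iff.mp this
    exact Subtype.ext hy
  have hdisj2 : Disjoint (N.subgroupOf L) ((K ⊓ L).subgroupOf L) := by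
    rw [Subgroup.disjoint_def]
    intro y hy1 hy2
    rw [Subgroup.mem_subgroupOf] at hy1 hy2
    exact Subtype.ext (Subgroup.disjoint_def.mp hcomp.disjoint hy1 hy2.1)
  have hcomp1 : (N.subgroupOf L).IsComplement' ((Subgroup.zpowers g).subgroupOf L) := by
    apply Subgroup.isComplement'_of_card_mul_and_disjoint _ hdisj1
    rw [card_subgroupOf' hNL, card_subgroupOf' hzle, Nat.card_zpowers, hLcard, mul_comm]
  have hcomp2 : (N.subgroupOf L).IsComplement' ((K ⊓ L).subgroupOf L) := by
    apply Subgroup.isComplement'_of_card_mul_and_disjoint _ hdisj2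
    rw [card_subgroupOf' hNL, card_subgroupOf' inf_le_right, hKL, hLcard, mul_comm]
  have hcommL : ∀ u v : L, u * v * u⁻¹ * v⁻¹ ∈ N.subgroupOf L := by
    intro u v
    rw [Subgroup.mem_subgroupOf]
    have hu : π (u : G) ∈ X := u.2
    have hv : π (v : G) ∈ X := v.2
    obtain ⟨i, hi⟩ := Subgroup.mem_zpowers_iff.mp hu
    obtain ⟨j, hj⟩ := Subgroup.mem_zpowers_iff.mp hv
    have hπ : π ((u : G) * v * (u : G)⁻¹ * (v : G)⁻¹) = 1 := by
      rw [map_mul, map_mul, map_mul, map_inv, map_inv, ← hi, ← hj]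
      group
    have : ((u * v * u⁻¹ * v⁻¹ : L) : G) = (u : G) * v * (u : G)⁻¹ * (v : G)⁻¹ := by push_cast; rfl
    rw [this]
    rwa [← MonoidHom.mem_ker, QuotientGroup.ker_mk' N] at hπ
  have hcop1 : Nat.Coprime (Nat.card (N.subgroupOf L)) (N.subgroupOf L).index := by
    rw [hcomp1.symm.index_eq_card, card_subgroupOf' hNL, card_subgroupOf' hzle, Nat.card_zpowers]
    exact Nat.Coprime.coprime_dvd_right hg hcop
  obtain ⟨l, hl⟩ := conj_complements (Nat.card L) L (N.subgroupOf L)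
    ((Subgroup.zpowers g).subgroupOf L) ((K ⊓ L).subgroupOf L) le_rfl hcop1 hcommL hcomp1 hcomp2
  have hcommute : ((MulAut.conj (l : G)).toMonoidHom.comp L.subtype) =
      L.subtype.comp (MulAut.conj l).toMonoidHom := by
    ext z
    simp
  have hfinal : (Subgroup.zpowers g).map (MulAut.conj (l : G)).toMonoidHom = K ⊓ L := by
    calc (Subgroup.zpowers g).map (MulAut.conj (l : G)).toMonoidHom
        = (((Subgroup.zpowers g).subgroupOf L).map L.subtype).map
            (MulAut.conj (l : G)).toMonoidHom := by
          rw [Subgroup.subgroupOf_map_subtype, inf_eq_left.mpr hzle]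
      _ = (((Subgroup.zpowers g).subgroupOf L).map (MulAut.conj l).toMonoidHom).map L.subtype := by
          rw [Subgroup.map_map, Subgroup.map_map, hcommute]
      _ = K ⊓ L := by rw [hl, Subgroup.subgroupOf_map_subtype, inf_eq_left.mpr inf_le_right]
  refine ⟨(l : G)⁻¹, ?_⟩
  have hgmem : (l : G) * g * (l : G)⁻¹ ∈ K ⊓ L := by
    rw [← hfinal]
    exact Subgroup.mem_map_of_mem _ (Subgroup.mem_zpowers g)
  refine ⟨(l : G) * g * (l : G)⁻¹, hgmem.1, ?_⟩
  show (l : G)⁻¹ * ((l : G) * g * (l : G)⁻¹) * ((l : G)⁻¹)⁻¹ = g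
  group
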